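/- Let f ∈ R be nonzero and lie in the maximal ideal of R. Then ν_A(f) = ν_A(df), and f is ν_A(f)-final dominant if and only if df is ν_A(df)-final dominant. Consequently, for every γ ∈ ℝ, f is γ-final if and only if df is γ-final, with matching type (dominant iff dominant, recessive iff recessive). -/

import Mathlib

noncomputable section
open MvPowerSeries Classical

section Core

variable {k : Type} [Field k] {σ : Type}

/-- Weighted value of an exponent. -/
def wtG (W : σ → ℝ) (e : σ →₀ ℕ) : ℝ := e.sum fun i m => (m : ℝ) * W i

/-- Explicit value of a formal power series. -/
def nuG (W : σ → ℝ) (f : MvPowerSeries σ k) : EReal :=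
  sInf {v : EReal | ∃ e : σ →₀ ℕ, MvPowerSeries.coeff e f ≠ 0 ∧ v = ((wtG W e : ℝ) : EReal)}

/-- Derivative operators: `x·∂/∂x` for logarithmic variables, `∂/∂y` for plain ones. -/
def DopG (isLog : σ → Bool) (b : σ) (f : MvPowerSeries σ k) : MvPowerSeries σ k :=
  fun e => if isLog b then (e b : k) * MvPowerSeries.coeff e f
    else ((e b : k) + 1) * MvPowerSeries.coeff (e + Finsupp.single b 1) f

/-- The differential of a function as a logarithmic 1-form. -/
def dFnG (isLog : σ → Bool) (f : MvPowerSeries σ k) : σ → MvPowerSeries σ k :=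
  fun b => DopG isLog b f

/-- Explicit value of a logarithmic 1-form. -/
def nu1G (W : σ → ℝ) (ω : σ → MvPowerSeries σ k) : EReal := ⨅ b, nuG W (ω b)

/-- Wedge of two 1-forms, as an alternating 2-tensor. -/
def w2G (α β : σ → MvPowerSeries σ k) : σ → σ → MvPowerSeries σ k :=
  fun a b => α a * β b - α b * β a

/-- Exterior derivative of a 1-form, as an alternating 2-tensor. -/
def dF1G (isLog : σ → Bool) (ω : σ → MvPowerSeries σ k) : σ → σ → MvPowerSeries σ k :=
  fun a b => DopG isLog a (ω b) - DopG isLog b (ω a)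

/-- Explicit value of a 2-form. -/
def nu2G (W : σ → ℝ) (Ω : σ → σ → MvPowerSeries σ k) : EReal := ⨅ a, ⨅ b, nuG W (Ω a b)

/-- Wedge of a 1-form with a 2-form, as an alternating 3-tensor. -/
def w12G (θ : σ → MvPowerSeries σ k) (Ω : σ → σ → MvPowerSeries σ k) :
    σ → σ → σ → MvPowerSeries σ k :=
  fun a b c => θ a * Ω b c - θ b * Ω a c + θ c * Ω a b

/-- Explicit value of a 3-form. -/
def nu3G (W : σ → ℝ) (T : σ → σ → σ → MvPowerSeries σ k) : EReal :=
  ⨅ a, ⨅ b, ⨅ c, nuG W (T a b c)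

/-- `f` is dominant at its own explicit value: the value is realized by a monomial
purely in the distinguished (`isX`) variables. -/
def DomAtG (W : σ → ℝ) (isX : σ → Prop) (f : MvPowerSeries σ k) : Prop :=
  ∃ e : σ →₀ ℕ, (∀ i, ¬ isX i → e i = 0) ∧ MvPowerSeries.coeff e f ≠ 0 ∧
    ((wtG W e : ℝ) : EReal) = nuG W f

/-- `f` is `γ`-final dominant. -/
def FinalDomFnG (W : σ → ℝ) (isX : σ → Prop) (γ : ℝ) (f : MvPowerSeries σ k) : Prop :=
  nuG W f ≤ (γ : EReal) ∧ DomAtG W isX f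

/-- A 1-form is dominant at its own explicit value: realized by a `dx_i/x_i`-coefficient. -/
def Dom1AtG (W : σ → ℝ) (isX : σ → Prop) (ω : σ → MvPowerSeries σ k) : Prop :=
  ∃ i, isX i ∧ nuG W (ω i) = nu1G W ω ∧ DomAtG W isX (ω i)

/-- A 1-form is `γ`-final dominant. -/
def FinalDom1G (W : σ → ℝ) (isX : σ → Prop) (γ : ℝ) (ω : σ → MvPowerSeries σ k) : Prop :=
  nu1G W ω ≤ (γ : EReal) ∧ Dom1AtG W isX ω

end Core

abbrev Idx (r n : ℕ) := Sum (Fin r) (Fin n)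


section MyAux
variable {k : Type} [Field k] [CharZero k] {σ : Type}

lemma my_coeff_apply (g : MvPowerSeries σ k) (e : σ →₀ ℕ) :
    MvPowerSeries.coeff e g = g e := rfl

lemma my_nuG_le {W : σ → ℝ} {g : MvPowerSeries σ k} {e : σ →₀ ℕ}
    (h : MvPowerSeries.coeff e g ≠ 0) : nuG W g ≤ ((wtG W e : ℝ) : EReal) :=
  sInf_le ⟨e, h, rfl⟩

lemma my_le_nuG {W : σ → ℝ} {g : MvPowerSeries σ k} {c : EReal}
    (h : ∀ e, MvPowerSeries.coeff e g ≠ 0 → c ≤ ((wtG W e : ℝ) : EReal)) :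
    c ≤ nuG W g := by
  apply le_sInf; rintro v ⟨e, he, rfl⟩; exact h e he

lemma my_wt_add (W : σ → ℝ) (a b : σ →₀ ℕ) : wtG W (a + b) = wtG W a + wtG W b := by
  classical
  unfold wtG
  rw [Finsupp.sum_add_index (by intros; simp) (by intros; push_cast; ring)]

lemma my_wt_single (W : σ → ℝ) (b : σ) : wtG W (Finsupp.single b 1) = W b := by
  unfold wtG
  rw [Finsupp.sum_single_index (by simp)]
  simp

lemma my_coeff_dop_log {isLog : σ → Bool} {b : σ} (hb : isLog b = true)
    (f : MvPowerSeries σ k) (e : σ →₀ ℕ) :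
    MvPowerSeries.coeff e (DopG isLog b f) = (e b : k) * MvPowerSeries.coeff e f := by
  rw [my_coeff_apply]; simp [DopG, hb]

lemma my_coeff_dop_nonlog {isLog : σ → Bool} {b : σ} (hb : isLog b = false)
    (f : MvPowerSeries σ k) (e : σ →₀ ℕ) :
    MvPowerSeries.coeff e (DopG isLog b f) =
      ((e b : k) + 1) * MvPowerSeries.coeff (e + Finsupp.single b 1) f := by
  rw [my_coeff_apply]; simp [DopG, hb]

variable {W : σ → ℝ} {isLog : σ → Bool}

lemma my_nuf_le_nu1 (hW : ∀ b, isLog b = false → W b = 0) (f : MvPowerSeries σ k) :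
    nuG W f ≤ nu1G W (dFnG isLog f) := by
  refine le_iInf fun b => my_le_nuG fun e he => ?_
  cases hb : isLog b with
  | true =>
    rw [show dFnG isLog f b = DopG isLog b f from rfl, my_coeff_dop_log hb] at he
    exact my_nuG_le (right_ne_zero_of_mul he)
  | false =>
    rw [show dFnG isLog f b = DopG isLog b f from rfl, my_coeff_dop_nonlog hb] at he
    have h2 : MvPowerSeries.coeff (e + Finsupp.single b 1) f ≠ 0 :=
      right_ne_zero_of_mul he
    have hwt : wtG W (e + Finsupp.single b 1) = wtG W e := by
      rw [my_wt_add, my_wt_single, hW b hb, add_zero]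
    calc nuG W f ≤ ((wtG W (e + Finsupp.single b 1) : ℝ) : EReal) := my_nuG_le h2
      _ = _ := by rw [hwt]

lemma my_nu1_le_nuf (hW : ∀ b, isLog b = false → W b = 0) {f : MvPowerSeries σ k}
    (hm : MvPowerSeries.coeff 0 f = 0) :
    nu1G W (dFnG isLog f) ≤ nuG W f := by
  refine my_le_nuG fun e he => ?_
  have hene : e ≠ 0 := by rintro rfl; exact he hm
  obtain ⟨b, hb⟩ := Finsupp.ne_iff.mp hene
  simp only [Finsupp.coe_zero, Pi.zero_apply] at hb
  cases hlog : isLog b with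
  | true =>
    have hco : MvPowerSeries.coeff e (dFnG isLog f b) ≠ 0 := by
      rw [show dFnG isLog f b = DopG isLog b f from rfl, my_coeff_dop_log hlog]
      exact mul_ne_zero (Nat.cast_ne_zero.mpr hb) he
    exact le_trans (iInf_le _ b) (my_nuG_le hco)
  | false =>
    set e' := e - Finsupp.single b 1 with he'
    have hle : Finsupp.single b 1 ≤ e :=
      Finsupp.single_le_iff.mpr (Nat.one_le_iff_ne_zero.mpr hb)
    have hsum : e' + Finsupp.single b 1 = e := tsub_add_cancel_of_le hle
    have hco : MvPowerSeries.coeff e' (dFnG isLog f b) ≠ 0 := by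
      rw [show dFnG isLog f b = DopG isLog b f from rfl, my_coeff_dop_nonlog hlog, hsum]
      refine mul_ne_zero ?_ he
      have : ((e' b : ℕ) : k) + 1 = ((e' b + 1 : ℕ) : k) := by push_cast; ring
      rw [this]
      exact Nat.cast_ne_zero.mpr (Nat.succ_ne_zero _)
    have hwt : wtG W e' = wtG W e := by
      conv_rhs => rw [← hsum]
      rw [my_wt_add, my_wt_single, hW b hlog, add_zero]
    calc nu1G W (dFnG isLog f) ≤ nuG W (dFnG isLog f b) := iInf_le _ b
      _ ≤ ((wtG W e' : ℝ) : EReal) := my_nuG_le hco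
      _ = _ := by rw [hwt]

end MyAux

/-- for `0 ≠ f` in the maximal ideal, `ν_A(f) = ν_A(df)`, `f` is
`ν_A(f)`-final dominant iff `df` is `ν_A(df)`-final dominant, and for every `γ`,
`f` is `γ`-final iff `df` is, with matching type. -/
theorem statement2 {k : Type} [Field k] [CharZero k] {r n : ℕ} (hr : 0 < r)
    (w : Fin r → ℝ) (hw : ∀ i, 0 < w i) (hind : LinearIndependent ℚ w)
    (f : MvPowerSeries (Idx r n) k) (hf : f ≠ 0) (hm : MvPowerSeries.coeff 0 f = 0) :
    nuG (Sum.elim w fun _ => (0:ℝ)) f =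
      nu1G (Sum.elim w fun _ => (0:ℝ)) (dFnG (fun s => s.isLeft) f) ∧
    (DomAtG (Sum.elim w fun _ => (0:ℝ)) (fun s => s.isLeft = true) f ↔
      Dom1AtG (Sum.elim w fun _ => (0:ℝ)) (fun s => s.isLeft = true)
        (dFnG (fun s => s.isLeft) f)) ∧
    (∀ γ : ℝ,
      (FinalDomFnG (Sum.elim w fun _ => (0:ℝ)) (fun s => s.isLeft = true) γ f ↔
        FinalDom1G (Sum.elim w fun _ => (0:ℝ)) (fun s => s.isLeft = true) γ
          (dFnG (fun s => s.isLeft) f)) ∧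
      ((γ : EReal) < nuG (Sum.elim w fun _ => (0:ℝ)) f ↔
        (γ : EReal) < nu1G (Sum.elim w fun _ => (0:ℝ)) (dFnG (fun s => s.isLeft) f))) := by
  classical
  set W : Idx r n → ℝ := Sum.elim w fun _ => (0:ℝ) with hWdef
  set isLog : Idx r n → Bool := fun s => s.isLeft with hLdef
  have hW : ∀ b, isLog b = false → W b = 0 := by
    rintro (i | j) hb
    · simp [hLdef] at hb
    · simp [hWdef]
  have h1 : nuG W f = nu1G W (dFnG isLog f) :=
    le_antisymm (my_nuf_le_nu1 hW f) (my_nu1_le_nuf hW hm)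
  have h2 : DomAtG W (fun s : Idx r n => s.isLeft = true) f ↔
      Dom1AtG W (fun s : Idx r n => s.isLeft = true) (dFnG isLog f) := by
    constructor
    · rintro ⟨e, hsupp, hne, hval⟩
      have hene : e ≠ 0 := by rintro rfl; exact hne hm
      obtain ⟨b, hb⟩ := Finsupp.ne_iff.mp hene
      simp only [Finsupp.coe_zero, Pi.zero_apply] at hb
      have hbx : b.isLeft = true := by
        by_contra hx; exact hb (hsupp b hx)
      have hco : MvPowerSeries.coeff e (dFnG isLog f b) ≠ 0 := by
        rw [show dFnG isLog f b = DopG isLog b f from rfl, my_coeff_dop_log hbx]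
        exact mul_ne_zero (Nat.cast_ne_zero.mpr hb) hne
      have hub : nuG W (dFnG isLog f b) ≤ ((wtG W e : ℝ) : EReal) := my_nuG_le hco
      have hlb : nuG W f ≤ nuG W (dFnG isLog f b) :=
        le_trans (my_nuf_le_nu1 hW f) (iInf_le _ b)
      have heq : ((wtG W e : ℝ) : EReal) = nuG W (dFnG isLog f b) :=
        le_antisymm (hval ▸ hlb) hub
      have hnu : nuG W (dFnG isLog f b) = nu1G W (dFnG isLog f) := by
        rw [← heq, hval, h1]
      exact ⟨b, hbx, hnu, e, hsupp, hco, heq⟩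
    · rintro ⟨i, hix, hnu, e, hsupp, hne, hval⟩
      rw [show dFnG isLog f i = DopG isLog i f from rfl, my_coeff_dop_log hix] at hne
      refine ⟨e, hsupp, right_ne_zero_of_mul hne, ?_⟩
      rw [hval, hnu, h1]
  refine ⟨h1, h2, fun γ => ⟨?_, ?_⟩⟩
  · unfold FinalDomFnG FinalDom1G
    rw [h1, h2]
  · rw [h1]
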